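/- Let p be prime and n ≥ 1. The representation I(n) = Ind_{K_0(p^n)}^{K} 1 of K = GL_2(Z_p) by right translation on functions K → C left-invariant under K_0(p^n) has dimension [K : K_0(p^n)] = p^{n-1}(p+1), and decomposes as a direct sum of exactly n+1 pairwise non-isomorphic irreducible representations, each appearing with multiplicity one. -/

import Mathlib

open Matrix

/-- `K₀(pⁿ)` inside `K = GL₂(ℤ_p)`. -/
def K0Z (p : ℕ) [Fact p.Prime] (n : ℕ) : Set (Matrix (Fin 2) (Fin 2) ℤ_[p]) :=
  {g | IsUnit g.det ∧ (p : ℤ_[p]) ^ n ∣ g 1 0}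

/-- `I(n) = Ind_{K₀(pⁿ)}^K 1`: complex functions on matrices over `ℤ_p`
supported on `K = GL₂(ℤ_p)` and invariant under left translation by `K₀(pⁿ)`. -/
noncomputable def Isub (p : ℕ) [Fact p.Prime] (n : ℕ) :
    Submodule ℂ (Matrix (Fin 2) (Fin 2) ℤ_[p] → ℂ) where
  carrier := {φ | (∀ k ∈ K0Z p n, ∀ g, φ (k * g) = φ g) ∧
    ∀ g : Matrix (Fin 2) (Fin 2) ℤ_[p], ¬ IsUnit g.det → φ g = 0}
  zero_mem' := ⟨fun _ _ _ => rfl, fun _ _ => rfl⟩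
  add_mem' := by
    rintro a b ⟨ha1, ha2⟩ ⟨hb1, hb2⟩
    exact ⟨fun k hk g => by simp only [Pi.add_apply, ha1 k hk g, hb1 k hk g],
      fun g hg => by simp only [Pi.add_apply, ha2 g hg, hb2 g hg, add_zero]⟩
  smul_mem' := by
    rintro c a ⟨ha1, ha2⟩
    exact ⟨fun k hk g => by simp only [Pi.smul_apply, ha1 k hk g],
      fun g hg => by simp only [Pi.smul_apply, ha2 g hg, smul_zero]⟩

/-- A subspace is invariant under right translation by `K = GL₂(ℤ_p)`. -/
def RightInvariant (p : ℕ) [Fact p.Prime]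
    (W : Submodule ℂ (Matrix (Fin 2) (Fin 2) ℤ_[p] → ℂ)) : Prop :=
  ∀ g : Matrix (Fin 2) (Fin 2) ℤ_[p], IsUnit g.det →
    ∀ φ ∈ W, (fun x => φ (x * g)) ∈ W

namespace St11

variable (p : ℕ) [hp : Fact p.Prime]

instance (m : ℕ) : NeZero (p ^ m) := ⟨pow_ne_zero _ hp.out.ne_zero⟩

/-- units in `ZMod (p^m)` are the non-multiples of `p` (for `m ≥ 1`). -/
lemma isUnit_iff_not_dvd {m : ℕ} (hm : 1 ≤ m) (x : ZMod (p ^ m)) :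
    IsUnit x ↔ ¬ (p : ZMod (p ^ m)) ∣ x := by
  have hpd : p ∣ p ^ m := dvd_pow_self p (by omega)
  have hcast : ((x.val : ℕ) : ZMod (p ^ m)) = x := ZMod.natCast_rightInverse x
  have h1 : IsUnit x ↔ Nat.Coprime x.val (p ^ m) := by
    conv_lhs => rw [← hcast]
    exact ZMod.isUnit_iff_coprime _ _
  have h2 : Nat.Coprime x.val (p ^ m) ↔ ¬ p ∣ x.val := by
    rw [Nat.coprime_pow_right_iff (by omega), Nat.coprime_comm,
      Nat.Prime.coprime_iff_not_dvd hp.out]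
  have h3 : (p : ZMod (p ^ m)) ∣ x ↔ p ∣ x.val := by
    constructor
    · rintro ⟨y, hy⟩
      have h' := congrArg (ZMod.castHom hpd (ZMod p)) hy
      simp only [_root_.map_mul, map_natCast, ZMod.natCast_self, zero_mul] at h'
      rw [← hcast, map_natCast] at h'
      exact (ZMod.natCast_eq_zero_iff _ _).mp h'
    · rintro ⟨k, hk⟩
      exact ⟨(k : ZMod (p ^ m)), by rw [← hcast, hk]; push_cast; ring⟩
  rw [h1, h2, h3]

lemma nonunit_comb {m : ℕ} {x y : ZMod (p ^ m)} (hx : ¬IsUnit x) (hy : ¬IsUnit y)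
    (a b : ZMod (p ^ m)) : ¬ IsUnit (x * a + y * b) := by
  rcases Nat.eq_zero_or_pos m with hm | hm
  · subst hm
    haveI : Subsingleton (ZMod (p ^ 0)) := by
      rw [pow_zero]
      exact ZMod.subsingleton_iff.mpr rfl
    exact absurd (Subsingleton.elim x 1 ▸ isUnit_one) hx
  · rw [isUnit_iff_not_dvd p hm] at hx hy ⊢
    push_neg at hx hy
    intro h
    exact h (dvd_add (hx.mul_right a) (hy.mul_right b))

lemma pow_card_eq_zero (n : ℕ) : (p : ZMod (p ^ n)) ^ n = 0 := by
  have : ((p ^ n : ℕ) : ZMod (p ^ n)) = 0 := ZMod.natCast_self _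
  push_cast at this
  exact this

section Nu
variable (n : ℕ)

/-- `p`-valuation in `ZMod (p^n)`, truncated at `n`. -/
noncomputable def nu (x : ZMod (p ^ n)) : ℕ :=
  @Nat.findGreatest (fun k => (p : ZMod (p ^ n)) ^ k ∣ x) (Classical.decPred _) n

lemma nu_le (x : ZMod (p ^ n)) : nu p n x ≤ n := by
  unfold nu
  letI := Classical.decPred (fun k => (p : ZMod (p ^ n)) ^ k ∣ x)
  exact Nat.findGreatest_le n

lemma nu_spec (x : ZMod (p ^ n)) : (p : ZMod (p ^ n)) ^ (nu p n x) ∣ x := by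
  unfold nu
  letI := Classical.decPred (fun k => (p : ZMod (p ^ n)) ^ k ∣ x)
  exact Nat.findGreatest_spec (P := fun k => (p : ZMod (p ^ n)) ^ k ∣ x) (Nat.zero_le n)
    (by show (p : ZMod (p ^ n)) ^ 0 ∣ x
        rw [pow_zero]; exact one_dvd x)

lemma nu_max {x : ZMod (p ^ n)} {k : ℕ} (hk : k ≤ n)
    (h : (p : ZMod (p ^ n)) ^ k ∣ x) : k ≤ nu p n x := by
  letI := Classical.decPred (fun k => (p : ZMod (p ^ n)) ^ k ∣ x)
  exact Nat.le_findGreatest hk h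

lemma nu_eq {x : ZMod (p ^ n)} {k : ℕ} (hk : k ≤ n)
    (h1 : (p : ZMod (p ^ n)) ^ k ∣ x)
    (h2 : k < n → ¬ (p : ZMod (p ^ n)) ^ (k + 1) ∣ x) : nu p n x = k := by
  refine le_antisymm ?_ (nu_max p n hk h1)
  by_contra hlt
  push_neg at hlt
  have hkn : k < n := lt_of_lt_of_le hlt (nu_le p n x)
  exact h2 hkn (dvd_trans (pow_dvd_pow _ hlt) (nu_spec p n x))

lemma eq_zero_of_nu_eq {x : ZMod (p ^ n)} (h : nu p n x = n) : x = 0 := by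
  have := nu_spec p n x
  rw [h, pow_card_eq_zero] at this
  exact zero_dvd_iff.mp this

lemma exists_unit_factor {x : ZMod (p ^ n)} (hn : 1 ≤ n) (hk : nu p n x < n) :
    ∃ u : (ZMod (p ^ n))ˣ, x = (p : ZMod (p ^ n)) ^ (nu p n x) * u := by
  obtain ⟨y, hy⟩ := nu_spec p n x
  by_cases hu : IsUnit y
  · exact ⟨hu.unit, by rw [IsUnit.unit_spec]; exact hy⟩
  · exfalso
    have hpy : (p : ZMod (p ^ n)) ∣ y := by
      by_contra hndvd
      exact hu ((isUnit_iff_not_dvd p hn y).mpr hndvd)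
    obtain ⟨z, hz⟩ := hpy
    have hx2 : x = (p : ZMod (p ^ n)) ^ (nu p n x + 1) * z := by
      conv_lhs => rw [hy, hz]
      ring
    have : (p : ZMod (p ^ n)) ^ (nu p n x + 1) ∣ x := ⟨z, hx2⟩
    exact absurd (nu_max p n (by omega) this) (by omega)

end Nu

/-! ### The projective line over `ZMod (p^m)` -/

/-- unimodular rows -/
abbrev Unim (m : ℕ) := {v : Fin 2 → ZMod (p ^ m) // IsUnit (v 0) ∨ IsUnit (v 1)}

noncomputable instance (m : ℕ) : Fintype (Unim p m) := by
  classical exact (Subtype.fintype _)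

def usetoid (m : ℕ) : Setoid (Unim p m) where
  r v w := ∃ u : (ZMod (p ^ m))ˣ, (u : ZMod (p ^ m)) • v.1 = w.1
  iseqv := by
    refine ⟨fun v => ⟨1, by simp⟩, ?_, ?_⟩
    · rintro v w ⟨u, h⟩
      exact ⟨u⁻¹, by rw [← h, smul_smul]; simp⟩
    · rintro a b c ⟨u, h⟩ ⟨u', h'⟩
      exact ⟨u' * u, by rw [← h', ← h, smul_smul]; norm_cast⟩

/-- the projective line -/
def Xp (m : ℕ) := Quotient (usetoid p m)

noncomputable instance (m : ℕ) : Fintype (Xp p m) := by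
  classical exact Quotient.fintype _

/-- explicit 2×2 matrices -/
def M2 {m : ℕ} (a b c d : ZMod (p ^ m)) : Matrix (Fin 2) (Fin 2) (ZMod (p ^ m)) :=
  Matrix.of ![![a, b], ![c, d]]

lemma det_M2 {m : ℕ} (a b c d : ZMod (p ^ m)) : (M2 p a b c d).det = a * d - b * c :=
  Matrix.det_fin_two_of a b c d

/-- build a unit matrix from entries with unit determinant -/
noncomputable def mkU {m : ℕ} (a b c d : ZMod (p ^ m)) (h : IsUnit (a * d - b * c)) :
    (Matrix (Fin 2) (Fin 2) (ZMod (p ^ m)))ˣ :=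
  (Matrix.isUnit_iff_isUnit_det _ |>.mpr (by rw [det_M2]; exact h)).unit

lemma mkU_coe {m : ℕ} (a b c d : ZMod (p ^ m)) (h : IsUnit (a * d - b * c)) :
    ((mkU p a b c d h : (Matrix (Fin 2) (Fin 2) (ZMod (p ^ m)))ˣ) :
      Matrix (Fin 2) (Fin 2) (ZMod (p ^ m))) = M2 p a b c d := IsUnit.unit_spec _

lemma vecMul_apply {m : ℕ} (v : Fin 2 → ZMod (p ^ m))
    (A : Matrix (Fin 2) (Fin 2) (ZMod (p ^ m))) (j : Fin 2) :
    (v ᵥ* A) j = v 0 * A 0 j + v 1 * A 1 j := by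
  simp [Matrix.vecMul, dotProduct, Fin.sum_univ_two]

lemma vecMul_expand {m : ℕ} (v : Fin 2 → ZMod (p ^ m))
    (A : Matrix (Fin 2) (Fin 2) (ZMod (p ^ m))) :
    v ᵥ* A = ![v 0 * A 0 0 + v 1 * A 1 0, v 0 * A 0 1 + v 1 * A 1 1] := by
  funext j
  fin_cases j <;>
    simp [Matrix.vecMul, dotProduct, Fin.sum_univ_two]

lemma vecMul_M2 {m : ℕ} (v : Fin 2 → ZMod (p ^ m)) (a b c d : ZMod (p ^ m)) :
    v ᵥ* (M2 p a b c d) = ![v 0 * a + v 1 * c, v 0 * b + v 1 * d] := by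
  rw [vecMul_expand]
  simp [M2]

lemma unim_vecMul {m : ℕ} (v : Unim p m) (γ : (Matrix (Fin 2) (Fin 2) (ZMod (p ^ m)))ˣ) :
    IsUnit ((v.1 ᵥ* (γ : Matrix (Fin 2) (Fin 2) (ZMod (p ^ m)))) 0) ∨
    IsUnit ((v.1 ᵥ* (γ : Matrix (Fin 2) (Fin 2) (ZMod (p ^ m)))) 1) := by
  by_contra h
  push_neg at h
  obtain ⟨h0, h1⟩ := h
  set w := v.1 ᵥ* (γ : Matrix (Fin 2) (Fin 2) (ZMod (p ^ m))) with hw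
  have hv : v.1 = w ᵥ* ((γ⁻¹ : _ˣ) : Matrix (Fin 2) (Fin 2) (ZMod (p ^ m))) := by
    rw [hw, Matrix.vecMul_vecMul, ← Units.val_mul, mul_inv_cancel, Units.val_one,
      Matrix.vecMul_one]
  have : ∀ j, ¬ IsUnit (v.1 j) := by
    intro j
    rw [hv, vecMul_expand]
    fin_cases j
    · exact nonunit_comb p h0 h1 _ _
    · exact nonunit_comb p h0 h1 _ _
  rcases v.2 with h | h
  · exact this 0 h
  · exact this 1 h

/-- right action of unit matrices on the projective line -/
noncomputable def xact {m : ℕ} (x : Xp p m) (γ : (Matrix (Fin 2) (Fin 2) (ZMod (p ^ m)))ˣ) :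
    Xp p m :=
  Quotient.map (fun v => ⟨v.1 ᵥ* (γ : Matrix (Fin 2) (Fin 2) (ZMod (p ^ m))), unim_vecMul p v γ⟩)
    (by
      rintro v w ⟨u, h⟩
      refine ⟨u, funext fun j => ?_⟩
      have h0 : (u : ZMod (p ^ m)) * v.1 0 = w.1 0 := by simpa using congrFun h 0
      have h1 : (u : ZMod (p ^ m)) * v.1 1 = w.1 1 := by simpa using congrFun h 1
      show (u : ZMod (p ^ m)) * ((v.1 ᵥ* _) j) = (w.1 ᵥ* _) j
      rw [vecMul_apply, vecMul_apply, ← h0, ← h1]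
      ring) x

lemma xact_mk {m : ℕ} (v : Unim p m) (γ : (Matrix (Fin 2) (Fin 2) (ZMod (p ^ m)))ˣ) :
    xact p (⟦v⟧ : Xp p m) γ =
      ⟦⟨v.1 ᵥ* (γ : Matrix (Fin 2) (Fin 2) (ZMod (p ^ m))), unim_vecMul p v γ⟩⟧ := rfl

lemma xact_mul {m : ℕ} (x : Xp p m) (γ δ : (Matrix (Fin 2) (Fin 2) (ZMod (p ^ m)))ˣ) :
    xact p (xact p x γ) δ = xact p x (γ * δ) := by
  induction x using Quotient.ind with
  | _ a =>
  rw [xact_mk, xact_mk, xact_mk]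
  refine congrArg _ (Subtype.ext ?_)
  show (a.1 ᵥ* (γ : Matrix (Fin 2) (Fin 2) (ZMod (p ^ m)))) ᵥ* (δ : Matrix (Fin 2) (Fin 2) (ZMod (p ^ m)))
      = a.1 ᵥ* ((γ * δ : _ˣ) : Matrix (Fin 2) (Fin 2) (ZMod (p ^ m)))
  rw [Matrix.vecMul_vecMul, Units.val_mul]

lemma xact_one {m : ℕ} (x : Xp p m) : xact p x 1 = x := by
  induction x using Quotient.ind with
  | _ a =>
  rw [xact_mk]
  exact congrArg _ (Subtype.ext (by simp [Matrix.vecMul_one]))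


/-! ### Cardinality of the projective line -/

noncomputable def unitsEquivSubtype (m : ℕ) :
    (ZMod (p ^ m))ˣ ≃ {x : ZMod (p ^ m) // IsUnit x} where
  toFun u := ⟨u, u.isUnit⟩
  invFun x := x.2.unit
  left_inv u := Units.ext (by simp)
  right_inv x := Subtype.ext (by simp)

noncomputable def sumEquivXp (m : ℕ) :
    (ZMod (p ^ m) ⊕ {x : ZMod (p ^ m) // ¬ IsUnit x}) ≃ Xp p m := by
  classical
  refine Equiv.ofBijective (Sum.elim
    (fun c => (⟦⟨![c, 1], Or.inr isUnit_one⟩⟧ : Xp p m))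
    (fun d => (⟦⟨![1, d.1], Or.inl isUnit_one⟩⟧ : Xp p m))) ⟨?_, ?_⟩
  · rintro (c | d) (c' | d') h
    · obtain ⟨u, hu⟩ := Quotient.exact h
      have h1 : (u : ZMod (p ^ m)) * 1 = 1 := by simpa using congrFun hu 1
      have h0 : (u : ZMod (p ^ m)) * c = c' := by simpa using congrFun hu 0
      rw [mul_one] at h1
      rw [h1, one_mul] at h0
      rw [h0]
    · obtain ⟨u, hu⟩ := Quotient.exact h
      have h1 : (u : ZMod (p ^ m)) * 1 = d'.1 := by simpa using congrFun hu 1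
      exact absurd (h1 ▸ (u.isUnit.mul isUnit_one)) d'.2
    · obtain ⟨u, hu⟩ := Quotient.exact h
      have h1 : (u : ZMod (p ^ m)) * d.1 = 1 := by simpa using congrFun hu 1
      exact absurd (isUnit_of_mul_isUnit_right (h1 ▸ isUnit_one)) d.2
    · obtain ⟨u, hu⟩ := Quotient.exact h
      have h0 : (u : ZMod (p ^ m)) * 1 = 1 := by simpa using congrFun hu 0
      have h1 : (u : ZMod (p ^ m)) * d.1 = d'.1 := by simpa using congrFun hu 1
      rw [mul_one] at h0
      rw [h0, one_mul] at h1
      rw [Subtype.ext h1]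
  · intro x
    induction x using Quotient.ind with
    | _ v =>
    by_cases h1 : IsUnit (v.1 1)
    · refine ⟨Sum.inl (v.1 0 * ((h1.unit⁻¹ : _ˣ) : ZMod (p ^ m))), ?_⟩
      refine Quotient.sound ⟨h1.unit, funext fun j => ?_⟩
      fin_cases j
      · show (h1.unit : ZMod (p ^ m)) * (v.1 0 * ((h1.unit⁻¹ : _ˣ) : ZMod (p ^ m))) = v.1 0
        rw [mul_comm, mul_assoc, Units.inv_mul, mul_one]
      · show (h1.unit : ZMod (p ^ m)) * 1 = v.1 1
        rw [mul_one, IsUnit.unit_spec]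
    · have h0 : IsUnit (v.1 0) := v.2.resolve_right h1
      have hdn : ¬ IsUnit (v.1 1 * ((h0.unit⁻¹ : _ˣ) : ZMod (p ^ m))) := by
        intro hd
        exact h1 (by
          have : v.1 1 * ((h0.unit⁻¹ : _ˣ) : ZMod (p ^ m)) * (h0.unit : ZMod (p ^ m)) = v.1 1 := by
            rw [mul_assoc, Units.inv_mul, mul_one]
          exact this ▸ (hd.mul h0.unit.isUnit))
      refine ⟨Sum.inr ⟨v.1 1 * ((h0.unit⁻¹ : _ˣ) : ZMod (p ^ m)), hdn⟩, ?_⟩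
      refine Quotient.sound ⟨h0.unit, funext fun j => ?_⟩
      fin_cases j
      · show (h0.unit : ZMod (p ^ m)) * 1 = v.1 0
        rw [mul_one, IsUnit.unit_spec]
      · show (h0.unit : ZMod (p ^ m)) * (v.1 1 * ((h0.unit⁻¹ : _ˣ) : ZMod (p ^ m))) = v.1 1
        rw [mul_comm, mul_assoc, Units.inv_mul, mul_one]

lemma card_Xp {m : ℕ} (hm : 1 ≤ m) :
    Fintype.card (Xp p m) = p ^ (m - 1) * (p + 1) := by
  classical
  have hcard := Fintype.card_congr (sumEquivXp p m)
  rw [Fintype.card_sum] at hcard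
  have hnu : Fintype.card {x : ZMod (p ^ m) // ¬ IsUnit x} = p ^ m - p ^ (m - 1) * (p - 1) := by
    rw [Fintype.card_subtype_compl]
    rw [Fintype.card_congr (unitsEquivSubtype p m).symm]
    rw [ZMod.card_units_eq_totient, ZMod.card, Nat.totient_prime_pow hp.out (by omega)]
  rw [hnu, ZMod.card] at hcard
  rw [← hcard]
  obtain ⟨k, hk⟩ : ∃ k, p = k + 1 := ⟨p - 1, by have := hp.out.pos; omega⟩
  obtain ⟨t, ht⟩ : ∃ t, m = t + 1 := ⟨m - 1, by omega⟩
  subst hk ht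
  simp only [Nat.add_sub_cancel, pow_succ]
  set q := (k + 1) ^ t
  have h1 : q * (k + 1) - q * k = q := by
    rw [Nat.mul_succ, Nat.add_sub_cancel_left]
  rw [h1]
  ring

/-! ### Base points and orbit covering -/

def x0 (n : ℕ) : Xp p n := ⟦⟨![0, 1], Or.inr isUnit_one⟩⟧

def ypt (n m : ℕ) : Xp p n := ⟦⟨![(p : ZMod (p ^ n)) ^ m, 1], Or.inr isUnit_one⟩⟧

lemma xq_eq {n : ℕ} (v w : Unim p n) (γ : (Matrix (Fin 2) (Fin 2) (ZMod (p ^ n)))ˣ)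
    (h : v.1 ᵥ* (γ : Matrix (Fin 2) (Fin 2) (ZMod (p ^ n))) = w.1) :
    xact p ⟦v⟧ γ = ⟦w⟧ := by
  rw [xact_mk]
  exact congrArg _ (Subtype.ext h)

lemma xq_eq' {n : ℕ} (v w : Unim p n) (γ : (Matrix (Fin 2) (Fin 2) (ZMod (p ^ n)))ˣ)
    (u : (ZMod (p ^ n))ˣ)
    (h : (u : ZMod (p ^ n)) • (v.1 ᵥ* (γ : Matrix (Fin 2) (Fin 2) (ZMod (p ^ n)))) = w.1) :
    xact p ⟦v⟧ γ = ⟦w⟧ := by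
  rw [xact_mk]
  exact Quotient.sound ⟨u, h⟩

lemma trans_x0 (n : ℕ) (x : Xp p n) : ∃ γ, xact p (x0 p n) γ = x := by
  induction x using Quotient.ind with
  | _ v =>
  by_cases h1 : IsUnit (v.1 1)
  · refine ⟨mkU p 1 0 (v.1 0) (v.1 1) (by simpa using h1), xq_eq p _ v _ ?_⟩
    rw [mkU_coe, vecMul_M2]
    funext j
    fin_cases j <;> simp
  · have h0 : IsUnit (v.1 0) := v.2.resolve_right h1
    refine ⟨mkU p 0 1 (v.1 0) (v.1 1) (by simpa using h0.neg), xq_eq p _ v _ ?_⟩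
    rw [mkU_coe, vecMul_M2]
    funext j
    fin_cases j <;> simp

lemma stab_reach {n : ℕ} (hn : 1 ≤ n) (w : Unim p n) :
    ∃ b, xact p (x0 p n) b = x0 p n ∧ xact p (ypt p n (nu p n (w.1 0))) b = ⟦w⟧ := by
  haveI : Fact (1 < p ^ n) :=
    ⟨lt_of_lt_of_le hp.out.one_lt (le_trans (le_refl p) (by
      calc p = p ^ 1 := (pow_one p).symm
      _ ≤ p ^ n := Nat.pow_le_pow_right hp.out.pos hn))⟩
  set c := w.1 0 with hc
  set d := w.1 1 with hd
  rcases eq_or_lt_of_le (nu_le p n c) with hm | hm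
  · -- nu c = n, so c = 0 and d is a unit
    have hc0 : c = 0 := eq_zero_of_nu_eq p n hm
    have hdu : IsUnit d := by
      refine w.2.resolve_left ?_
      rw [← hc, hc0]
      exact not_isUnit_zero
    refine ⟨mkU p 1 0 0 d (by simpa using hdu), xq_eq' p _ _ _ hdu.unit⁻¹ ?_, ?_⟩
    · rw [mkU_coe, vecMul_M2]
      funext j
      fin_cases j
      · show ((hdu.unit⁻¹ : _ˣ) : ZMod (p ^ n)) * ((0 : ZMod (p ^ n)) * 1 + 1 * 0) = 0
        ring
      · show ((hdu.unit⁻¹ : _ˣ) : ZMod (p ^ n)) * ((0 : ZMod (p ^ n)) * 0 + 1 * d) = 1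
        rw [zero_mul, zero_add, one_mul]
        exact hdu.unit.inv_mul
    · rw [hm]
      refine xq_eq p _ w _ ?_
      rw [mkU_coe, vecMul_M2]
      funext j
      fin_cases j
      · show (p : ZMod (p ^ n)) ^ n * 1 + 1 * 0 = w.1 0
        rw [pow_card_eq_zero, ← hc, hc0]; ring
      · show (p : ZMod (p ^ n)) ^ n * 0 + 1 * d = w.1 1
        rw [← hd]; ring
  · obtain ⟨u, hu⟩ := exists_unit_factor p n hn hm
    rcases Nat.eq_zero_or_pos (nu p n c) with hm0 | hm1
    · -- c is a unit
      have hcu : IsUnit c := by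
        rw [hu, hm0, pow_zero, one_mul]; exact u.isUnit
      refine ⟨mkU p c (d - 1) 0 1 (by simpa using hcu), xq_eq p _ _ _ ?_, ?_⟩
      · rw [mkU_coe, vecMul_M2]
        funext j
        fin_cases j <;> simp
      · rw [hm0]
        refine xq_eq p _ w _ ?_
        rw [mkU_coe, vecMul_M2]
        funext j
        fin_cases j
        · show (p : ZMod (p ^ n)) ^ 0 * c + 1 * 0 = w.1 0
          rw [pow_zero, ← hc]; ring
        · show (p : ZMod (p ^ n)) ^ 0 * (d - 1) + 1 * 1 = w.1 1
          rw [pow_zero, ← hd]; ring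
    · -- 1 ≤ nu c < n : c = p^m * u, d is a unit
      have hdvd : (p : ZMod (p ^ n)) ∣ c := by
        obtain ⟨k, hk⟩ : ∃ k, nu p n c = k + 1 := ⟨nu p n c - 1, by omega⟩
        refine ⟨(p : ZMod (p ^ n)) ^ k * u, ?_⟩
        conv_lhs => rw [hu, hk]
        ring
      have hcn : ¬ IsUnit c := by
        rw [isUnit_iff_not_dvd p hn]
        exact fun h => h hdvd
      have hdu : IsUnit d := w.2.resolve_left (hc ▸ hcn)
      refine ⟨mkU p u 0 0 d (by simpa using u.isUnit.mul hdu), xq_eq' p _ _ _ hdu.unit⁻¹ ?_, ?_⟩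
      · rw [mkU_coe, vecMul_M2]
        funext j
        fin_cases j
        · show ((hdu.unit⁻¹ : _ˣ) : ZMod (p ^ n)) * ((0 : ZMod (p ^ n)) * u + 1 * 0) = 0
          ring
        · show ((hdu.unit⁻¹ : _ˣ) : ZMod (p ^ n)) * ((0 : ZMod (p ^ n)) * 0 + 1 * d) = 1
          rw [zero_mul, zero_add, one_mul]
          exact hdu.unit.inv_mul
      · refine xq_eq p _ w _ ?_
        rw [mkU_coe, vecMul_M2]
        funext j
        fin_cases j
        · show (p : ZMod (p ^ n)) ^ (nu p n c) * u + 1 * 0 = w.1 0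
          rw [mul_zero, add_zero, ← hu, hc]
        · show (p : ZMod (p ^ n)) ^ (nu p n c) * 0 + 1 * d = w.1 1
          rw [← hd]; ring

lemma orbit_cover {n : ℕ} (hn : 1 ≤ n) (x y : Xp p n) :
    ∃ m : ℕ, m ≤ n ∧ ∃ γ, xact p (x0 p n) γ = x ∧ xact p (ypt p n m) γ = y := by
  obtain ⟨γ, hγ⟩ := trans_x0 p n x
  obtain ⟨w, hw⟩ := Quotient.exists_rep (xact p y γ⁻¹)
  obtain ⟨b, hb1, hb2⟩ := stab_reach p hn w
  refine ⟨nu p n (w.1 0), nu_le p n _, b * γ, ?_, ?_⟩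
  · rw [← xact_mul, hb1, hγ]
  · rw [← xact_mul, hb2, hw, xact_mul, inv_mul_cancel, xact_one]


/-! ### The function space and the right-translation action -/

abbrev Wsp (n : ℕ) := EuclideanSpace ℂ (Xp p n)

noncomputable def rho (n : ℕ) (γ : (Matrix (Fin 2) (Fin 2) (ZMod (p ^ n)))ˣ) :
    Wsp p n →ₗ[ℂ] Wsp p n where
  toFun f := WithLp.toLp 2 (fun x => f (xact p x γ))
  map_add' f g := rfl
  map_smul' c f := rfl

lemma rho_apply (n : ℕ) (γ) (f : Wsp p n) (x : Xp p n) :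
    rho p n γ f x = f (xact p x γ) := rfl

lemma rho_rho (n : ℕ) (γ δ) (f : Wsp p n) :
    rho p n γ (rho p n δ f) = rho p n (γ * δ) f :=
  PiLp.ext fun x => congrArg f (xact_mul p x γ δ)

lemma rho_one_apply (n : ℕ) (f : Wsp p n) : rho p n 1 f = f :=
  PiLp.ext fun x => congrArg f (xact_one p x)

noncomputable def xactEquiv (n : ℕ) (γ : (Matrix (Fin 2) (Fin 2) (ZMod (p ^ n)))ˣ) :
    Xp p n ≃ Xp p n where
  toFun x := xact p x γ
  invFun x := xact p x γ⁻¹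
  left_inv x := by
    show xact p (xact p x γ) γ⁻¹ = x
    rw [xact_mul, mul_inv_cancel, xact_one]
  right_inv x := by
    show xact p (xact p x γ⁻¹) γ = x
    rw [xact_mul, inv_mul_cancel, xact_one]

lemma inner_rho (n : ℕ) (γ) (f g : Wsp p n) :
    (inner ℂ (rho p n γ f) (rho p n γ g) : ℂ) = inner ℂ f g := by
  rw [PiLp.inner_apply, PiLp.inner_apply]
  exact Fintype.sum_equiv (xactEquiv p n γ) _ _ (fun x => rfl)

/-- invariance of a subspace under the action -/
def InvS (n : ℕ) (U : Submodule ℂ (Wsp p n)) : Prop :=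
  ∀ γ, ∀ f ∈ U, rho p n γ f ∈ U

lemma InvS.orth {n : ℕ} {U : Submodule ℂ (Wsp p n)} (hU : InvS p n U) : InvS p n Uᗮ := by
  intro γ g hg
  rw [Submodule.mem_orthogonal] at hg ⊢
  intro u hu
  have h1 : u = rho p n γ (rho p n γ⁻¹ u) := by
    rw [rho_rho, mul_inv_cancel, rho_one_apply]
  calc (inner ℂ u (rho p n γ g) : ℂ)
      = inner ℂ (rho p n γ (rho p n γ⁻¹ u)) (rho p n γ g) := by rw [← h1]
    _ = inner ℂ (rho p n γ⁻¹ u) g := inner_rho p n γ _ _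
    _ = 0 := hg _ (hU γ⁻¹ u hu)

lemma InvS.inf {n : ℕ} {U V : Submodule ℂ (Wsp p n)} (hU : InvS p n U) (hV : InvS p n V) :
    InvS p n (U ⊓ V) := fun γ f hf => ⟨hU γ f hf.1, hV γ f hf.2⟩

/-! ### Equivariant orthogonal projections -/

noncomputable def projL (n : ℕ) (U : Submodule ℂ (Wsp p n)) : Wsp p n →ₗ[ℂ] Wsp p n :=
  U.subtype ∘ₗ U.orthogonalProjectionOnto.toLinearMap

lemma projL_mem (n : ℕ) (U : Submodule ℂ (Wsp p n)) (w : Wsp p n) : projL p n U w ∈ U :=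
  (U.orthogonalProjectionOnto w).2

lemma projL_id (n : ℕ) (U : Submodule ℂ (Wsp p n)) {w : Wsp p n} (h : w ∈ U) :
    projL p n U w = w := Submodule.starProjection_eq_self_iff.mpr h

lemma projL_zero (n : ℕ) (U : Submodule ℂ (Wsp p n)) {w : Wsp p n} (h : w ∈ Uᗮ) :
    projL p n U w = 0 := by
  have := Submodule.orthogonalProjectionOnto_apply_of_mem_orthogonal h
  simp only [projL, LinearMap.comp_apply, ContinuousLinearMap.coe_coe, this,
    Submodule.subtype_apply, ZeroMemClass.coe_zero]

lemma projL_comm {n : ℕ} {U : Submodule ℂ (Wsp p n)} (hU : InvS p n U) (γ) (w : Wsp p n) :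
    projL p n U (rho p n γ w) = rho p n γ (projL p n U w) := by
  have hsub : w - projL p n U w ∈ Uᗮ := Submodule.sub_starProjection_mem_orthogonal w
  have ha : rho p n γ (projL p n U w) ∈ U := hU γ _ (projL_mem p n U w)
  have hb : rho p n γ (w - projL p n U w) ∈ Uᗮ := (InvS.orth p hU) γ _ hsub
  have hw : rho p n γ w = rho p n γ (projL p n U w) + rho p n γ (w - projL p n U w) := by
    rw [← map_add]
    congr 1
    abel
  rw [hw, map_add, projL_id p n U ha, projL_zero p n U hb, add_zero]

/-! ### Reduction maps between levels -/

noncomputable def redV {a b : ℕ} (h : (p : ℕ) ^ a ∣ p ^ b) (v : Unim p b) : Unim p a :=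
  ⟨fun i => ZMod.castHom h (ZMod (p ^ a)) (v.1 i), by
    rcases v.2 with h0 | h1
    · exact Or.inl (h0.map _)
    · exact Or.inr (h1.map _)⟩

noncomputable def redX {a b : ℕ} (h : (p : ℕ) ^ a ∣ p ^ b) : Xp p b → Xp p a :=
  Quotient.map (redV p h) (by
    rintro v w ⟨u, hu⟩
    refine ⟨Units.map (ZMod.castHom h (ZMod (p ^ a))).toMonoidHom u, funext fun i => ?_⟩
    show (ZMod.castHom h (ZMod (p ^ a))) u * (ZMod.castHom h (ZMod (p ^ a))) (v.1 i)
        = (ZMod.castHom h (ZMod (p ^ a))) (w.1 i)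
    rw [← _root_.map_mul]
    exact congrArg _ (congrFun hu i))

lemma redX_mk {a b : ℕ} (h : (p : ℕ) ^ a ∣ p ^ b) (v : Unim p b) :
    redX p h ⟦v⟧ = ⟦redV p h v⟧ := rfl

lemma redX_comp {a a' b : ℕ} (h1 : (p : ℕ) ^ a ∣ p ^ a') (h2 : (p : ℕ) ^ a' ∣ p ^ b)
    (x : Xp p b) :
    redX p h1 (redX p h2 x) = redX p (dvd_trans h1 h2) x := by
  induction x using Quotient.ind with
  | _ v =>
  rw [redX_mk, redX_mk, redX_mk]
  refine congrArg _ (Subtype.ext (funext fun i => ?_))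
  show (ZMod.castHom h1 (ZMod (p ^ a))) ((ZMod.castHom h2 (ZMod (p ^ a'))) (v.1 i))
      = (ZMod.castHom (dvd_trans h1 h2) (ZMod (p ^ a))) (v.1 i)
  exact RingHom.congr_fun (ZMod.castHom_comp h1 h2) (v.1 i)

lemma redX_surj {a b : ℕ} (ha : 1 ≤ a) (hab : a ≤ b) :
    Function.Surjective (redX p (pow_dvd_pow p hab)) := by
  have hb : 1 ≤ b := le_trans ha hab
  intro x
  induction x using Quotient.ind with
  | _ w =>
  have hlift : ∀ t : ZMod (p ^ a),
      (ZMod.castHom (pow_dvd_pow p hab) (ZMod (p ^ a))) ((t.val : ZMod (p ^ b))) = t := by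
    intro t
    rw [map_natCast]
    exact ZMod.natCast_rightInverse t
  have hunit : ∀ t : ZMod (p ^ a), IsUnit t → IsUnit ((t.val : ZMod (p ^ b))) := by
    intro t ht
    rw [isUnit_iff_not_dvd p hb]
    intro hdvd
    rw [isUnit_iff_not_dvd p ha] at ht
    refine ht ?_
    obtain ⟨y, hy⟩ := hdvd
    have := congrArg (ZMod.castHom (pow_dvd_pow p hab) (ZMod (p ^ a))) hy
    rw [hlift, _root_.map_mul, map_natCast] at this
    exact ⟨_, this⟩
  refine ⟨⟦⟨fun i => (((w.1 i).val : ZMod (p ^ b))), ?_⟩⟧, ?_⟩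
  · rcases w.2 with h0 | h1
    · exact Or.inl (hunit _ h0)
    · exact Or.inr (hunit _ h1)
  · rw [redX_mk]
    exact congrArg _ (Subtype.ext (funext fun i => hlift (w.1 i)))

lemma redX_equivariant {a b : ℕ} (h : (p : ℕ) ^ a ∣ p ^ b) (x : Xp p b)
    (γ : (Matrix (Fin 2) (Fin 2) (ZMod (p ^ b)))ˣ) :
    redX p h (xact p x γ) =
      xact p (redX p h x)
        (Units.map (RingHom.mapMatrix (ZMod.castHom h (ZMod (p ^ a)))).toMonoidHom γ) := by
  induction x using Quotient.ind with
  | _ v =>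
  rw [xact_mk, redX_mk, redX_mk, xact_mk]
  refine congrArg _ (Subtype.ext (funext fun i => ?_))
  show (ZMod.castHom h (ZMod (p ^ a))) ((v.1 ᵥ* _) i) = (((redV p h v).1) ᵥ* _) i
  rw [vecMul_apply, vecMul_apply, map_add, _root_.map_mul, _root_.map_mul]
  rfl

/-! ### The flag of subspaces -/

noncomputable def pullL (n : ℕ) {a : ℕ} (h : (p : ℕ) ^ a ∣ p ^ n) :
    (Xp p a → ℂ) →ₗ[ℂ] Wsp p n where
  toFun g := WithLp.toLp 2 (fun x => g (redX p h x))
  map_add' f g := rfl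
  map_smul' c f := rfl

noncomputable def cstL (n : ℕ) : ℂ →ₗ[ℂ] Wsp p n where
  toFun c := WithLp.toLp 2 (fun _ => c)
  map_add' f g := rfl
  map_smul' c f := rfl

noncomputable def Ftot (n : ℕ) (m : ℕ) : Submodule ℂ (Wsp p n) :=
  if m = 0 then LinearMap.range (cstL p n)
  else if h : m ≤ n then LinearMap.range (pullL p n (pow_dvd_pow p h)) else ⊤

lemma Ftot_zero (n : ℕ) : Ftot p n 0 = LinearMap.range (cstL p n) := by
  rw [Ftot, if_pos rfl]

lemma Ftot_pos (n : ℕ) {m : ℕ} (hm : m ≠ 0) (h : m ≤ n) :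
    Ftot p n m = LinearMap.range (pullL p n (pow_dvd_pow p h)) := by
  rw [Ftot, if_neg hm, dif_pos h]

lemma Ftot_inv (n : ℕ) (m : ℕ) (hmn : m ≤ n) : InvS p n (Ftot p n m) := by
  rcases Nat.eq_zero_or_pos m with rfl | hm
  · rw [Ftot_zero]
    rintro γ f ⟨c, rfl⟩
    exact ⟨c, rfl⟩
  · rw [Ftot_pos p n (by omega) hmn]
    rintro γ f ⟨g, rfl⟩
    refine ⟨fun y => g (xact p y
      (Units.map (RingHom.mapMatrix (ZMod.castHom (pow_dvd_pow p hmn)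
        (ZMod (p ^ m)))).toMonoidHom γ)), ?_⟩
    refine PiLp.ext fun x => ?_
    show g (xact p (redX p _ x) _) = g (redX p _ (xact p x γ))
    rw [redX_equivariant]

lemma Ftot_mono (n : ℕ) {a b : ℕ} (hab : a ≤ b) (hbn : b ≤ n) :
    Ftot p n a ≤ Ftot p n b := by
  rcases Nat.eq_zero_or_pos b with rfl | hb
  · have : a = 0 := by omega
    subst this
    exact le_refl _
  rcases Nat.eq_zero_or_pos a with rfl | ha
  · rw [Ftot_zero, Ftot_pos p n (by omega) hbn]
    rintro f ⟨c, rfl⟩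
    exact ⟨fun _ => c, rfl⟩
  · rw [Ftot_pos p n (by omega) (le_trans hab hbn), Ftot_pos p n (by omega) hbn]
    rintro f ⟨g, rfl⟩
    refine ⟨fun y => g (redX p (pow_dvd_pow p hab) y), ?_⟩
    refine PiLp.ext fun x => ?_
    show g (redX p _ (redX p _ x)) = g (redX p _ x)
    rw [redX_comp]

lemma pullL_inj (n : ℕ) {a : ℕ} (ha : 1 ≤ a) (h : a ≤ n) :
    Function.Injective (pullL p n (pow_dvd_pow p h)) := by
  intro g g' hgg
  funext y
  obtain ⟨x, rfl⟩ := redX_surj p ha h y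
  exact congrFun (congrArg WithLp.ofLp hgg) x

lemma finrank_Ftot_zero (n : ℕ) : Module.finrank ℂ (Ftot p n 0) = 1 := by
  rw [Ftot_zero]
  have hinj : Function.Injective (cstL p n) := by
    intro c c' hcc
    exact congrFun (congrArg WithLp.ofLp hcc) (x0 p n)
  rw [LinearMap.finrank_range_of_inj hinj, Module.finrank_self]

lemma finrank_Ftot (n : ℕ) {m : ℕ} (hm : 1 ≤ m) (hmn : m ≤ n) :
    Module.finrank ℂ (Ftot p n m) = p ^ (m - 1) * (p + 1) := by
  rw [Ftot_pos p n (by omega) hmn,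
    LinearMap.finrank_range_of_inj (pullL_inj p n hm hmn),
    Module.finrank_fintype_fun_eq_card, card_Xp p hm]

lemma finrank_Wsp (n : ℕ) (hn : 1 ≤ n) :
    Module.finrank ℂ (Wsp p n) = p ^ (n - 1) * (p + 1) := by
  rw [finrank_euclideanSpace, card_Xp p hn]

lemma Ftot_top (n : ℕ) (hn : 1 ≤ n) : Ftot p n n = ⊤ := by
  refine Submodule.eq_top_of_finrank_eq ?_
  rw [finrank_Ftot p n hn (le_refl n), finrank_Wsp p n hn]

lemma finrank_Ftot_lt (n : ℕ) {m : ℕ} (hm : m < n) :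
    Module.finrank ℂ (Ftot p n m) < Module.finrank ℂ (Ftot p n (m + 1)) := by
  have hp2 : 2 ≤ p := hp.out.two_le
  rcases Nat.eq_zero_or_pos m with rfl | hm1
  · rw [finrank_Ftot_zero, finrank_Ftot p n (le_refl 1) (by omega)]
    have : 1 ≤ p ^ (1 - 1) := Nat.one_le_pow _ _ (by omega)
    nlinarith
  · rw [finrank_Ftot p n hm1 (by omega), finrank_Ftot p n (by omega) (by omega)]
    have h1 : p ^ (m - 1) < p ^ (m + 1 - 1) :=
      Nat.pow_lt_pow_right (by omega) (by omega)
    have h2 : 0 < p + 1 := by omega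
    exact Nat.mul_lt_mul_of_lt_of_le h1 (le_refl _) h2

/-! ### The pieces -/

noncomputable def Mp (n : ℕ) (i : ℕ) : Submodule ℂ (Wsp p n) :=
  if i = 0 then Ftot p n 0 else Ftot p n i ⊓ (Ftot p n (i - 1))ᗮ

lemma Mp_zero (n : ℕ) : Mp p n 0 = Ftot p n 0 := by rw [Mp, if_pos rfl]

lemma Mp_pos (n : ℕ) {i : ℕ} (hi : i ≠ 0) :
    Mp p n i = Ftot p n i ⊓ (Ftot p n (i - 1))ᗮ := by rw [Mp, if_neg hi]

lemma Mp_inv (n : ℕ) {i : ℕ} (hi : i ≤ n) : InvS p n (Mp p n i) := by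
  rcases Nat.eq_zero_or_pos i with rfl | hi1
  · rw [Mp_zero]; exact Ftot_inv p n 0 (by omega)
  · rw [Mp_pos p n (by omega)]
    exact InvS.inf p (Ftot_inv p n i hi) (InvS.orth p (Ftot_inv p n (i - 1) (by omega)))

lemma Mp_le_Ftot (n : ℕ) (i : ℕ) : Mp p n i ≤ Ftot p n i := by
  rcases Nat.eq_zero_or_pos i with rfl | hi1
  · rw [Mp_zero]
  · rw [Mp_pos p n (by omega)]; exact inf_le_left

lemma Mp_orth (n : ℕ) {i j : ℕ} (hij : i < j) (hj : j ≤ n)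
    {f g : Wsp p n} (hf : f ∈ Mp p n i) (hg : g ∈ Mp p n j) : (inner ℂ f g : ℂ) = 0 := by
  have hgo : g ∈ (Ftot p n (j - 1))ᗮ := by
    rw [Mp_pos p n (by omega)] at hg
    exact hg.2
  have hfF : f ∈ Ftot p n (j - 1) :=
    Ftot_mono p n (by omega : i ≤ j - 1) (by omega) (Mp_le_Ftot p n i hf)
  exact (Submodule.mem_orthogonal _ _).mp hgo f hfF

lemma Mp_ne_bot (n : ℕ) (hn : 1 ≤ n) {i : ℕ} (hi : i ≤ n) : Mp p n i ≠ ⊥ := by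
  rcases Nat.eq_zero_or_pos i with rfl | hi1
  · rw [Mp_zero]
    intro hbot
    have := finrank_Ftot_zero p n
    rw [hbot] at this
    simp at this
  · rw [Mp_pos p n (by omega)]
    intro hbot
    have hle : Ftot p n (i - 1) ≤ Ftot p n i := Ftot_mono p n (by omega) hi
    have hsup := Submodule.sup_orthogonal_inf_of_hasOrthogonalProjection hle
    rw [inf_comm] at hbot
    rw [hbot, sup_bot_eq] at hsup
    have := finrank_Ftot_lt p n (show i - 1 < n by omega)
    rw [show i - 1 + 1 = i by omega, hsup] at this
    exact lt_irrefl _ this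

lemma Mp_sup (n : ℕ) (hn : 1 ≤ n) :
    (⨆ i : Fin (n + 1), Mp p n i.val) = ⊤ := by
  have key : ∀ m, m ≤ n → Ftot p n m ≤ ⨆ i : Fin (n + 1), Mp p n i.val := by
    intro m
    induction m with
    | zero =>
      intro _
      have : Mp p n 0 ≤ ⨆ i : Fin (n + 1), Mp p n i.val :=
        le_iSup (fun i : Fin (n + 1) => Mp p n i.val) ⟨0, by omega⟩
      rw [Mp_zero] at this
      exact this
    | succ m ih =>
      intro hm
      have hle : Ftot p n m ≤ Ftot p n (m + 1) := Ftot_mono p n (by omega) hm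
      have hsup := Submodule.sup_orthogonal_inf_of_hasOrthogonalProjection hle
      rw [← hsup]
      refine sup_le (ih (by omega)) ?_
      have hM : Mp p n (m + 1) ≤ ⨆ i : Fin (n + 1), Mp p n i.val :=
        le_iSup (fun i : Fin (n + 1) => Mp p n i.val) ⟨m + 1, by omega⟩
      rw [Mp_pos p n (by omega)] at hM
      rw [Nat.add_sub_cancel] at hM
      exact le_trans (le_of_eq (inf_comm _ _)) hM
  rw [eq_top_iff, ← Ftot_top p n hn]
  exact key n (le_refl n)

lemma Mp_indep (n : ℕ) (hn : 1 ≤ n) :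
    iSupIndep (fun i : Fin (n + 1) => Mp p n i.val) := by
  refine OrthogonalFamily.independent ?_
  intro i j hij v w
  rcases lt_or_gt_of_ne (fun h => hij (Fin.ext h) : i.val ≠ j.val) with h | h
  · exact Mp_orth p n h (by omega) v.2 w.2
  · show (inner ℂ (v : Wsp p n) (w : Wsp p n) : ℂ) = 0
    rw [← inner_conj_symm, Mp_orth p n h (by omega) w.2 v.2, map_zero]


/-! ### The commutant -/

noncomputable def CommSub (n : ℕ) : Submodule ℂ (Wsp p n →ₗ[ℂ] Wsp p n) where
  carrier := {T | ∀ γ f, T (rho p n γ f) = rho p n γ (T f)}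
  zero_mem' := by intro γ f; simp
  add_mem' := by
    intro T S hT hS γ f
    simp only [LinearMap.add_apply, hT γ f, hS γ f, map_add]
  smul_mem' := by
    intro c T hT γ f
    simp only [LinearMap.smul_apply, hT γ f]
    exact ((rho p n γ).map_smul c (T f)).symm

open Classical in
noncomputable def sgl (n : ℕ) (y : Xp p n) : Wsp p n :=
  WithLp.toLp 2 (fun x => if x = y then (1 : ℂ) else 0)

open Classical in
lemma sgl_apply (n : ℕ) (y x : Xp p n) :
    sgl p n y x = if x = y then (1 : ℂ) else 0 := rfl

lemma rho_sgl (n : ℕ) (γ) (z : Xp p n) :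
    rho p n γ (sgl p n z) = sgl p n (xact p z γ⁻¹) := by
  classical
  refine PiLp.ext fun x => ?_
  rw [rho_apply, sgl_apply, sgl_apply]
  refine if_congr ?_ rfl rfl
  constructor
  · intro h
    rw [← h, xact_mul, mul_inv_cancel, xact_one]
  · intro h
    rw [h, xact_mul, inv_mul_cancel, xact_one]

lemma sgl_decomp (n : ℕ) (f : Wsp p n) : f = ∑ y : Xp p n, f y • sgl p n y := by
  classical
  refine PiLp.ext fun x => ?_
  rw [WithLp.ofLp_sum, Finset.sum_apply]
  have : ∀ y : Xp p n, (f y • sgl p n y) x = if x = y then f y else 0 := by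
    intro y
    show f y * (if x = y then (1 : ℂ) else 0) = _
    rw [mul_ite, mul_one, mul_zero]
  rw [Finset.sum_congr rfl (fun y _ => this y), Finset.sum_ite_eq _ x (fun y => f y)]
  simp

lemma comm_eq_zero {n : ℕ} (hn : 1 ≤ n) {T : Wsp p n →ₗ[ℂ] Wsp p n}
    (hT : T ∈ CommSub p n)
    (hθ : ∀ m : ℕ, m ≤ n → T (sgl p n (ypt p n m)) (x0 p n) = 0) : T = 0 := by
  have key : ∀ z : Xp p n, T (sgl p n z) = 0 := by
    intro z
    refine PiLp.ext fun x => ?_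
    obtain ⟨m, hm, γ, hx, hz⟩ := orbit_cover p hn x z
    have h1 : rho p n γ⁻¹ (sgl p n (ypt p n m)) = sgl p n z := by
      rw [rho_sgl, inv_inv, hz]
    have h2 := hT γ⁻¹ (sgl p n (ypt p n m))
    rw [h1] at h2
    have h3 := congrFun (congrArg WithLp.ofLp h2) x
    show T (sgl p n z) x = (0 : Wsp p n) x
    rw [h3]
    show T (sgl p n (ypt p n m)) (xact p x γ⁻¹) = (0 : Wsp p n) x
    have hx0 : xact p x γ⁻¹ = x0 p n := by
      rw [← hx, xact_mul, mul_inv_cancel, xact_one]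
    rw [hx0]
    exact hθ m hm
  refine LinearMap.ext fun f => ?_
  have hdec := sgl_decomp p n f
  calc T f = T (∑ y : Xp p n, f y • sgl p n y) := by rw [← hdec]
    _ = ∑ y : Xp p n, f y • T (sgl p n y) := by
        rw [map_sum]
        exact Finset.sum_congr rfl fun y _ => T.map_smul _ _
    _ = 0 := by simp only [key, smul_zero, Finset.sum_const_zero]

lemma not_linearIndependent_comm {n : ℕ} (hn : 1 ≤ n)
    (v : Fin (n + 2) → (Wsp p n →ₗ[ℂ] Wsp p n)) (hv : ∀ k, v k ∈ CommSub p n)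
    (hind : LinearIndependent ℂ v) : False := by
  let θ : (Wsp p n →ₗ[ℂ] Wsp p n) →ₗ[ℂ] (Fin (n + 1) → ℂ) :=
    { toFun := fun T => fun m => T (sgl p n (ypt p n m.val)) (x0 p n)
      map_add' := by intro T S; funext m; rfl
      map_smul' := by intro c T; funext m; rfl }
  have hdisj : Disjoint (Submodule.span ℂ (Set.range v)) (LinearMap.ker θ) := by
    rw [Submodule.disjoint_def]
    intro T hTspan hTker
    have hTcomm : T ∈ CommSub p n := by
      have hle : Submodule.span ℂ (Set.range v) ≤ CommSub p n := by
        rw [Submodule.span_le]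
        rintro _ ⟨k, rfl⟩
        exact hv k
      exact hle hTspan
    refine comm_eq_zero p hn hTcomm ?_
    intro m hm
    exact congrFun (LinearMap.mem_ker.mp hTker) ⟨m, by omega⟩
  have hind2 := hind.map (f := θ) hdisj
  have hcard := LinearIndependent.fintype_card_le_finrank hind2
  rw [Module.finrank_fintype_fun_eq_card, Fintype.card_fin, Fintype.card_fin] at hcard
  omega

/-! ### piece orthogonality helpers -/

lemma Mp_mem_orth {n : ℕ} {j k : ℕ} (hjk : j ≠ k) (hj : j ≤ n) (hk : k ≤ n)
    {w : Wsp p n} (hw : w ∈ Mp p n k) : w ∈ (Mp p n j)ᗮ := by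
  rw [Submodule.mem_orthogonal]
  intro u hu
  rcases lt_or_gt_of_ne hjk with h | h
  · exact Mp_orth p n h hk hu hw
  · rw [← inner_conj_symm, Mp_orth p n h hj hw hu, map_zero]

lemma Mp_eq_zero_of_mem_both {n : ℕ} {i j : ℕ} (hij : i ≠ j) (hi : i ≤ n) (hj : j ≤ n)
    {x : Wsp p n} (hxi : x ∈ Mp p n i) (hxj : x ∈ Mp p n j) : x = 0 := by
  have horth := Mp_mem_orth p hij hi hj hxj
  rw [Submodule.mem_orthogonal] at horth
  exact inner_self_eq_zero.mp (horth x hxi)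

lemma proj_sum_eval {n : ℕ} (g : Fin (n + 1) → ℂ) {k : Fin (n + 1)}
    {w : Wsp p n} (hw : w ∈ Mp p n k.val) :
    ∑ j : Fin (n + 1), g j • projL p n (Mp p n j.val) w = g k • w := by
  rw [Finset.sum_eq_single k]
  · rw [projL_id p n _ hw]
  · intro j _ hj
    have hjk : j.val ≠ k.val := fun h => hj (Fin.ext h)
    rw [projL_zero p n _
      (Mp_mem_orth p hjk (Nat.lt_succ_iff.mp j.isLt) (Nat.lt_succ_iff.mp k.isLt) hw),
      smul_zero]
  · intro h; exact absurd (Finset.mem_univ k) h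

lemma sum_eval_snoc {n : ℕ} (g : Fin (n + 2) → ℂ)
    (vv : Fin (n + 1) → (Wsp p n →ₗ[ℂ] Wsp p n)) (L : Wsp p n →ₗ[ℂ] Wsp p n)
    (hsum : ∑ k, g k • (Fin.snoc vv L : Fin (n + 2) → (Wsp p n →ₗ[ℂ] Wsp p n)) k = 0)
    (w : Wsp p n) :
    (∑ j : Fin (n + 1), g (Fin.castSucc j) • vv j w) + g (Fin.last (n + 1)) • L w = 0 := by
  have h0 : ∑ k, g k • ((Fin.snoc vv L : Fin (n+2) → _) k w) = 0 := by
    have := congrArg (fun T : Wsp p n →ₗ[ℂ] Wsp p n => T w) hsum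
    simpa only [LinearMap.sum_apply, LinearMap.smul_apply, LinearMap.zero_apply] using this
  rw [Fin.sum_univ_castSucc] at h0
  simpa only [Fin.snoc_castSucc, Fin.snoc_last] using h0

/-! ### irreducibility of the pieces -/

lemma model_simple {n : ℕ} (hn : 1 ≤ n) {i : Fin (n + 1)}
    {U : Submodule ℂ (Wsp p n)} (hUle : U ≤ Mp p n i.val) (hUinv : InvS p n U) :
    U = ⊥ ∨ U = Mp p n i.val := by
  by_contra hcon
  push_neg at hcon
  obtain ⟨hUbot, hUne⟩ := hcon
  have hi : i.val ≤ n := Nat.lt_succ_iff.mp i.isLt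
  obtain ⟨u0, hu0U, hu0ne⟩ := Submodule.ne_bot_iff U |>.mp hUbot
  have hu0M : u0 ∈ Mp p n i.val := hUle hu0U
  obtain ⟨wex, hwexM, hwexU⟩ := SetLike.exists_of_lt (lt_of_le_of_ne hUle hUne)
  set vv : Fin (n + 1) → (Wsp p n →ₗ[ℂ] Wsp p n) :=
    fun j => projL p n (Mp p n j.val) with hvv
  set L : Wsp p n →ₗ[ℂ] Wsp p n := projL p n U ∘ₗ projL p n (Mp p n i.val) with hL
  refine not_linearIndependent_comm p hn (Fin.snoc vv L) ?_ ?_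
  · intro k
    refine Fin.lastCases ?_ ?_ k
    · rw [Fin.snoc_last]
      intro γ f
      rw [LinearMap.comp_apply, LinearMap.comp_apply,
        projL_comm p (Mp_inv p n hi) γ f, projL_comm p hUinv γ _]
    · intro j
      rw [Fin.snoc_castSucc]
      intro γ f
      exact projL_comm p (Mp_inv p n (Nat.lt_succ_iff.mp j.isLt)) γ f
  · rw [Fintype.linearIndependent_iff]
    intro g hsum
    have heval := sum_eval_snoc p g vv L hsum
    -- evaluate at u0
    have h1 := heval u0
    rw [hvv, proj_sum_eval p (fun j => g (Fin.castSucc j)) (k := i) hu0M] at h1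
    have hLu0 : L u0 = u0 := by
      rw [hL, LinearMap.comp_apply, projL_id p n _ hu0M, projL_id p n _ hu0U]
    rw [hLu0, ← add_smul] at h1
    have hgi : g (Fin.castSucc i) + g (Fin.last (n + 1)) = 0 :=
      by_contra fun hne => hu0ne (by
        have := smul_eq_zero.mp h1
        tauto)
    -- evaluate at wex
    have h2 := heval wex
    rw [hvv, proj_sum_eval p (fun j => g (Fin.castSucc j)) (k := i) hwexM] at h2
    have hLw : L wex = projL p n U wex := by
      rw [hL, LinearMap.comp_apply, projL_id p n _ hwexM]
    rw [hLw] at h2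
    have hglast : g (Fin.last (n + 1)) = - g (Fin.castSucc i) := by
      have := hgi; linear_combination this
    rw [hglast, neg_smul] at h2
    -- h2 : g ci • wex - g ci • projL U wex = 0
    have h3 : g (Fin.castSucc i) • (wex - projL p n U wex) = 0 := by
      rw [smul_sub]
      linear_combination (norm := abel) h2
    have hgci : g (Fin.castSucc i) = 0 := by
      by_contra hne
      have hsub : wex - projL p n U wex = 0 := by
        rcases smul_eq_zero.mp h3 with h | h
        · exact absurd h hne
        · exact h
      have : wex = projL p n U wex := by
        have := sub_eq_zero.mp hsub
        exact this
      exact hwexU (this ▸ projL_mem p n U wex)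
    have hglast0 : g (Fin.last (n + 1)) = 0 := by rw [hglast, hgci, neg_zero]
    -- evaluate at elements of other pieces
    intro k
    refine Fin.lastCases hglast0 ?_ k
    intro j
    by_cases hji : j = i
    · rw [hji]; exact hgci
    · obtain ⟨mj, hmjM, hmjne⟩ := Submodule.ne_bot_iff _ |>.mp
        (Mp_ne_bot p n hn (Nat.lt_succ_iff.mp j.isLt))
      have h4 := heval mj
      rw [hvv, proj_sum_eval p (fun j2 => g (Fin.castSucc j2)) (k := j) hmjM] at h4
      have hLmj : L mj = 0 := by
        rw [hL, LinearMap.comp_apply, projL_zero p n _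
          (Mp_mem_orth p (fun h => hji (Fin.ext h.symm)) hi (Nat.lt_succ_iff.mp j.isLt) hmjM),
          map_zero]
      rw [hLmj, smul_zero, add_zero] at h4
      rcases smul_eq_zero.mp h4 with h | h
      · exact h
      · exact absurd h hmjne

lemma model_noniso {n : ℕ} (hn : 1 ≤ n) {i j : Fin (n + 1)} (hij : i ≠ j)
    (e : (Mp p n i.val) ≃ₗ[ℂ] (Mp p n j.val))
    (he : ∀ γ (u u' : Mp p n i.val), ((u' : Wsp p n) = rho p n γ (u : Wsp p n)) →
      ((e u' : Wsp p n) = rho p n γ (e u : Wsp p n))) : False := by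
  have hi : i.val ≤ n := Nat.lt_succ_iff.mp i.isLt
  have hj : j.val ≤ n := Nat.lt_succ_iff.mp j.isLt
  have hijv : i.val ≠ j.val := fun h => hij (Fin.ext h)
  set pri : Wsp p n →ₗ[ℂ] Mp p n i.val :=
    (projL p n (Mp p n i.val)).codRestrict (Mp p n i.val) (projL_mem p n _) with hpri
  set L : Wsp p n →ₗ[ℂ] Wsp p n := (Mp p n j.val).subtype ∘ₗ e.toLinearMap ∘ₗ pri with hL
  have hLapp : ∀ w, L w = (e (pri w) : Wsp p n) := fun w => rfl
  have hpriapp : ∀ w, (pri w : Wsp p n) = projL p n (Mp p n i.val) w := fun w => rfl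
  set vv : Fin (n + 1) → (Wsp p n →ₗ[ℂ] Wsp p n) :=
    fun k => projL p n (Mp p n k.val) with hvv
  obtain ⟨u0, hu0M, hu0ne⟩ := Submodule.ne_bot_iff _ |>.mp (Mp_ne_bot p n hn hi)
  refine not_linearIndependent_comm p hn (Fin.snoc vv L) ?_ ?_
  · intro k
    refine Fin.lastCases ?_ ?_ k
    · rw [Fin.snoc_last]
      intro γ f
      have hmem : rho p n γ (projL p n (Mp p n i.val) f) ∈ Mp p n i.val :=
        Mp_inv p n hi γ _ (projL_mem p n _ f)
      have hpr : pri (rho p n γ f) = ⟨rho p n γ (projL p n (Mp p n i.val) f), hmem⟩ :=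
        Subtype.ext (by rw [hpriapp, projL_comm p (Mp_inv p n hi) γ f])
      rw [hLapp, hLapp, hpr]
      exact he γ (pri f) _ rfl
    · intro k2
      rw [Fin.snoc_castSucc]
      intro γ f
      exact projL_comm p (Mp_inv p n (Nat.lt_succ_iff.mp k2.isLt)) γ f
  · rw [Fintype.linearIndependent_iff]
    intro g hsum
    have heval := sum_eval_snoc p g vv L hsum
    -- at u0 ∈ Mp i
    have h1 := heval u0
    rw [hvv, proj_sum_eval p (fun k => g (Fin.castSucc k)) (k := i) hu0M] at h1
    have hLu0 : L u0 = (e ⟨u0, hu0M⟩ : Wsp p n) := by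
      rw [hLapp]
      congr 1
      exact congrArg e (Subtype.ext (by rw [hpriapp, projL_id p n _ hu0M]))
    rw [hLu0] at h1
    have hgiA : g (Fin.castSucc i) • u0 = 0 := by
      refine Mp_eq_zero_of_mem_both p hijv hi hj ?_ ?_
      · exact Submodule.smul_mem _ _ hu0M
      · have : g (Fin.castSucc i) • u0 =
            - (g (Fin.last (n + 1)) • (e ⟨u0, hu0M⟩ : Wsp p n)) := by
          linear_combination (norm := abel) h1
        rw [this]
        exact Submodule.neg_mem _ (Submodule.smul_mem _ _ (e ⟨u0, hu0M⟩).2)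
    have hgci : g (Fin.castSucc i) = 0 := by
      rcases smul_eq_zero.mp hgiA with h | h
      · exact h
      · exact absurd h hu0ne
    have hgl : g (Fin.last (n + 1)) • (e ⟨u0, hu0M⟩ : Wsp p n) = 0 := by
      rw [hgci, zero_smul, zero_add] at h1
      exact h1
    have hglast : g (Fin.last (n + 1)) = 0 := by
      rcases smul_eq_zero.mp hgl with h | h
      · exact h
      · exfalso
        have he0 : e ⟨u0, hu0M⟩ = 0 := by
          apply Subtype.ext
          rw [h]
          rfl
        have hu00 : (⟨u0, hu0M⟩ : Mp p n i.val) = 0 :=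
          e.injective (by rw [he0, map_zero])
        exact hu0ne (by simpa using congrArg Subtype.val hu00)
    intro k
    refine Fin.lastCases hglast ?_ k
    intro k2
    by_cases hki : k2 = i
    · rw [hki]; exact hgci
    · obtain ⟨mk, hmkM, hmkne⟩ := Submodule.ne_bot_iff _ |>.mp
        (Mp_ne_bot p n hn (Nat.lt_succ_iff.mp k2.isLt))
      have h4 := heval mk
      rw [hvv, proj_sum_eval p (fun j2 => g (Fin.castSucc j2)) (k := k2) hmkM] at h4
      have hLmk : L mk = 0 := by
        have hpr0 : pri mk = 0 := Subtype.ext (by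
          rw [hpriapp]
          exact projL_zero p n _
            (Mp_mem_orth p (fun h => hki (Fin.ext h.symm)) hi (Nat.lt_succ_iff.mp k2.isLt) hmkM))
        rw [hLapp, hpr0, map_zero]
        rfl
      rw [hLmk, smul_zero, add_zero] at h4
      rcases smul_eq_zero.mp h4 with h | h
      · exact h
      · exact absurd h hmkne


/-! ### The bridge to `ℤ_p` -/

section Bridge

variable (n : ℕ)

noncomputable def pi0 : ℤ_[p] →+* ZMod (p ^ n) := PadicInt.toZModPow n

noncomputable def pim : Matrix (Fin 2) (Fin 2) ℤ_[p] →+* Matrix (Fin 2) (Fin 2) (ZMod (p ^ n)) :=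
  RingHom.mapMatrix (pi0 p n)

lemma pim_apply (g : Matrix (Fin 2) (Fin 2) ℤ_[p]) (i j : Fin 2) :
    pim p n g i j = pi0 p n (g i j) := rfl

lemma pi0_ker (x : ℤ_[p]) : pi0 p n x = 0 ↔ (p : ℤ_[p]) ^ n ∣ x := by
  have h1 : pi0 p n x = 0 ↔ x ∈ RingHom.ker (PadicInt.toZModPow (p := p) n) := by
    rw [RingHom.mem_ker]; rfl
  rw [h1, PadicInt.ker_toZModPow, Ideal.mem_span_singleton]

noncomputable def zlift (t : ZMod (p ^ n)) : ℤ_[p] := ((t.val : ℕ) : ℤ_[p])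

lemma pi0_zlift (t : ZMod (p ^ n)) : pi0 p n (zlift p n t) = t := by
  rw [zlift, map_natCast]
  exact ZMod.natCast_rightInverse t

lemma unit_lift {a : ℤ_[p]} (hn : 1 ≤ n) (ha : IsUnit (pi0 p n a)) : IsUnit a := by
  by_contra hnu
  have hlt : ‖a‖ < 1 :=
    lt_of_le_of_ne (PadicInt.norm_le_one a) (fun h => hnu (PadicInt.isUnit_iff.mpr h))
  obtain ⟨b, hb⟩ := (PadicInt.norm_lt_one_iff_dvd a).mp hlt
  rw [hb, _root_.map_mul] at ha
  have hpa : pi0 p n (p : ℤ_[p]) = (p : ZMod (p ^ n)) := by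
    have : ((p : ℕ) : ℤ_[p]) = (p : ℤ_[p]) := rfl
    rw [← this, map_natCast]
  rw [hpa] at ha
  rw [isUnit_iff_not_dvd p hn] at ha
  exact ha ⟨pi0 p n b, rfl⟩

lemma det_unit_map {g : Matrix (Fin 2) (Fin 2) ℤ_[p]} (hg : IsUnit g.det) :
    IsUnit (pim p n g).det := by
  have h : pi0 p n g.det = (pim p n g).det := by
    rw [pim, RingHom.mapMatrix_apply]
    exact RingHom.map_det _ _
  rw [← h]
  exact hg.map _

lemma row_unim {A : Matrix (Fin 2) (Fin 2) (ZMod (p ^ n))} (hA : IsUnit A.det) :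
    IsUnit (A 1 0) ∨ IsUnit (A 1 1) := by
  by_contra hcon
  push_neg at hcon
  obtain ⟨h0, h1⟩ := hcon
  have hdet : A.det = A 1 0 * (-(A 0 1)) + A 1 1 * (A 0 0) := by
    rw [Matrix.det_fin_two]; ring
  exact nonunit_comb p h0 h1 _ _ (hdet ▸ hA)

noncomputable def qcl (g : Matrix (Fin 2) (Fin 2) ℤ_[p]) (hg : IsUnit g.det) : Xp p n :=
  ⟦⟨fun i => pi0 p n (g 1 i), row_unim p n (det_unit_map p n hg)⟩⟧

lemma row1_mul {R : Type*} [CommRing R] (A B : Matrix (Fin 2) (Fin 2) R) (i : Fin 2) :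
    (A * B) 1 i = A 1 0 * B 0 i + A 1 1 * B 1 i := by
  rw [Matrix.mul_apply, Fin.sum_univ_two]

lemma qcl_left {k g : Matrix (Fin 2) (Fin 2) ℤ_[p]} (hk : k ∈ K0Z p n)
    (hg : IsUnit g.det) (hkg : IsUnit (k * g).det) :
    qcl p n (k * g) hkg = qcl p n g hg := by
  obtain ⟨hdk, hdvd⟩ := hk
  have hk10 : pi0 p n (k 1 0) = 0 := (pi0_ker p n _).mpr hdvd
  have hk11 : IsUnit (pi0 p n (k 1 1)) := by
    have hdet : IsUnit (pim p n k).det := det_unit_map p n hdk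
    have h2 : (pim p n k).det =
        pi0 p n (k 0 0) * pi0 p n (k 1 1) - pi0 p n (k 0 1) * pi0 p n (k 1 0) := by
      rw [Matrix.det_fin_two]; rfl
    rw [h2, hk10, mul_zero, sub_zero] at hdet
    exact isUnit_of_mul_isUnit_right hdet
  refine Eq.symm (Quotient.sound ⟨hk11.unit, funext fun i => ?_⟩)
  show (pi0 p n (k 1 1)) * pi0 p n (g 1 i) = pi0 p n ((k * g) 1 i)
  rw [row1_mul, map_add, _root_.map_mul, _root_.map_mul, hk10, zero_mul, zero_add]

lemma qcl_eq_imp {g h : Matrix (Fin 2) (Fin 2) ℤ_[p]} (hg : IsUnit g.det)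
    (hh : IsUnit h.det) (heq : qcl p n g hg = qcl p n h hh) :
    ∃ k ∈ K0Z p n, h = k * g := by
  set k := h * g⁻¹ with hkdef
  have hkg : k * g = h := by
    rw [hkdef, Matrix.mul_assoc, Matrix.nonsing_inv_mul g hg, Matrix.mul_one]
  have hdetk : IsUnit k.det := by
    have : k.det * g.det = h.det := by rw [← Matrix.det_mul, hkg]
    exact isUnit_of_mul_isUnit_left (this ▸ hh)
  refine ⟨k, ⟨hdetk, ?_⟩, hkg.symm⟩
  rw [← pi0_ker p n]
  obtain ⟨u, hu⟩ := Quotient.exact heq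
  -- hu : u • (row of g) = row of h
  have hrow : ∀ i : Fin 2, pi0 p n (h 1 i) = (u : ZMod (p ^ n)) * pi0 p n (g 1 i) :=
    fun i => (congrFun hu i).symm
  set B := pim p n g with hB
  have hdetB : IsUnit B.det := det_unit_map p n hg
  have hpimk : pim p n k * B = pim p n h := by
    rw [hB, ← _root_.map_mul, hkg]
  have hkB : pim p n k = pim p n h * B⁻¹ := by
    rw [← hpimk, Matrix.mul_assoc, Matrix.mul_nonsing_inv B hdetB, Matrix.mul_one]
  have : pim p n k 1 0 = (u : ZMod (p ^ n)) * ((B * B⁻¹) 1 0) := by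
    rw [hkB, row1_mul]
    have e0 : pim p n h 1 0 = (u : ZMod (p ^ n)) * pi0 p n (g 1 0) := hrow 0
    have e1 : pim p n h 1 1 = (u : ZMod (p ^ n)) * pi0 p n (g 1 1) := hrow 1
    rw [e0, e1, row1_mul]
    have b0 : pi0 p n (g 1 0) = B 1 0 := rfl
    have b1 : pi0 p n (g 1 1) = B 1 1 := rfl
    rw [b0, b1]
    ring
  rw [Matrix.mul_nonsing_inv B hdetB] at this
  have h10 : (1 : Matrix (Fin 2) (Fin 2) (ZMod (p ^ n))) 1 0 = 0 :=
    Matrix.one_apply_ne (by decide)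
  rw [h10, mul_zero] at this
  exact this

lemma qcl_surj (hn : 1 ≤ n) (x : Xp p n) :
    ∃ (g : Matrix (Fin 2) (Fin 2) ℤ_[p]) (hg : IsUnit g.det), qcl p n g hg = x := by
  induction x using Quotient.ind with
  | _ w =>
  by_cases h1 : IsUnit (w.1 1)
  · set g : Matrix (Fin 2) (Fin 2) ℤ_[p] :=
      Matrix.of ![![1, 0], ![zlift p n (w.1 0), zlift p n (w.1 1)]] with hgdef
    have hdet : g.det = zlift p n (w.1 1) := by
      rw [hgdef, Matrix.det_fin_two_of]; ring
    have hdu : IsUnit g.det := by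
      rw [hdet]
      exact unit_lift p n hn (by rw [pi0_zlift]; exact h1)
    refine ⟨g, hdu, ?_⟩
    refine congrArg _ (Subtype.ext (funext fun i => ?_))
    show pi0 p n (g 1 i) = w.1 i
    fin_cases i <;> simp [hgdef, pi0_zlift]
  · have h0 : IsUnit (w.1 0) := w.2.resolve_right h1
    set g : Matrix (Fin 2) (Fin 2) ℤ_[p] :=
      Matrix.of ![![0, 1], ![zlift p n (w.1 0), zlift p n (w.1 1)]] with hgdef
    have hdet : g.det = -zlift p n (w.1 0) := by
      rw [hgdef, Matrix.det_fin_two_of]; ring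
    have hdu : IsUnit g.det := by
      rw [hdet]
      exact (unit_lift p n hn (by rw [pi0_zlift]; exact h0)).neg
    refine ⟨g, hdu, ?_⟩
    refine congrArg _ (Subtype.ext (funext fun i => ?_))
    show pi0 p n (g 1 i) = w.1 i
    fin_cases i <;> simp [hgdef, pi0_zlift]

noncomputable def gamof (h : Matrix (Fin 2) (Fin 2) ℤ_[p]) (hh : IsUnit h.det) :
    (Matrix (Fin 2) (Fin 2) (ZMod (p ^ n)))ˣ :=
  (Matrix.isUnit_iff_isUnit_det (pim p n h) |>.mpr (det_unit_map p n hh)).unit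

lemma gamof_coe (h : Matrix (Fin 2) (Fin 2) ℤ_[p]) (hh : IsUnit h.det) :
    ((gamof p n h hh : (Matrix (Fin 2) (Fin 2) (ZMod (p ^ n)))ˣ) :
      Matrix (Fin 2) (Fin 2) (ZMod (p ^ n))) = pim p n h := IsUnit.unit_spec _

lemma gamof_surj (hn : 1 ≤ n) (γ : (Matrix (Fin 2) (Fin 2) (ZMod (p ^ n)))ˣ) :
    ∃ (h : Matrix (Fin 2) (Fin 2) ℤ_[p]) (hh : IsUnit h.det), gamof p n h hh = γ := by
  set h : Matrix (Fin 2) (Fin 2) ℤ_[p] :=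
    Matrix.of (fun i j => zlift p n ((γ : Matrix (Fin 2) (Fin 2) (ZMod (p ^ n))) i j))
    with hdef
  have hpim : pim p n h = (γ : Matrix (Fin 2) (Fin 2) (ZMod (p ^ n))) := by
    refine Matrix.ext fun i j => ?_
    rw [pim_apply]
    exact pi0_zlift p n _
  have hdu : IsUnit h.det := by
    refine unit_lift p n hn ?_
    have : pi0 p n h.det = (pim p n h).det := RingHom.map_det _ _
    rw [this, hpim]
    exact (Matrix.isUnit_iff_isUnit_det _).mp γ.isUnit
  exact ⟨h, hdu, Units.ext (by rw [gamof_coe, hpim])⟩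

lemma qcl_mul (x h : Matrix (Fin 2) (Fin 2) ℤ_[p]) (hx : IsUnit x.det)
    (hh : IsUnit h.det) (hxh : IsUnit (x * h).det) :
    qcl p n (x * h) hxh = xact p (qcl p n x hx) (gamof p n h hh) := by
  rw [qcl, qcl, xact_mk]
  refine congrArg _ (Subtype.ext (funext fun i => ?_))
  show pi0 p n ((x * h) 1 i) = ((fun i => pi0 p n (x 1 i)) ᵥ* _) i
  rw [vecMul_apply, gamof_coe, row1_mul, map_add, _root_.map_mul, _root_.map_mul]
  rfl

/-! ### The intertwining linear map -/

open Classical in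
noncomputable def Phi : Wsp p n →ₗ[ℂ] (Matrix (Fin 2) (Fin 2) ℤ_[p] → ℂ) where
  toFun f := fun g => if hg : IsUnit g.det then f (qcl p n g hg) else 0
  map_add' f f' := by
    classical
    funext g
    by_cases hg : IsUnit g.det <;> simp [hg]
  map_smul' c f := by
    classical
    funext g
    by_cases hg : IsUnit g.det <;> simp [hg]

open Classical in
lemma Phi_apply (f : Wsp p n) (g : Matrix (Fin 2) (Fin 2) ℤ_[p]) :
    Phi p n f g = if hg : IsUnit g.det then f (qcl p n g hg) else 0 := rfl

lemma Phi_apply_unit (f : Wsp p n) {g : Matrix (Fin 2) (Fin 2) ℤ_[p]} (hg : IsUnit g.det) :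
    Phi p n f g = f (qcl p n g hg) := by
  classical
  rw [Phi_apply, dif_pos hg]

lemma Phi_apply_nonunit (f : Wsp p n) {g : Matrix (Fin 2) (Fin 2) ℤ_[p]}
    (hg : ¬ IsUnit g.det) : Phi p n f g = 0 := by
  classical
  rw [Phi_apply, dif_neg hg]

lemma Phi_inj (hn : 1 ≤ n) : Function.Injective (Phi p n) := by
  intro f f' hff
  refine PiLp.ext fun x => ?_
  obtain ⟨g, hg, rfl⟩ := qcl_surj p n hn x
  have := congrFun hff g
  rwa [Phi_apply_unit p n f hg, Phi_apply_unit p n f' hg] at this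

lemma Phi_rho (f : Wsp p n) (h : Matrix (Fin 2) (Fin 2) ℤ_[p]) (hh : IsUnit h.det) :
    Phi p n (rho p n (gamof p n h hh) f) = fun x => Phi p n f (x * h) := by
  funext x
  by_cases hx : IsUnit x.det
  · have hxh : IsUnit (x * h).det := by
      rw [Matrix.det_mul]; exact hx.mul hh
    rw [Phi_apply_unit p n _ hx, Phi_apply_unit p n f hxh, rho_apply,
      qcl_mul p n x h hx hh hxh]
  · have hxh : ¬ IsUnit (x * h).det := by
      rw [Matrix.det_mul]
      intro hcon
      exact hx (isUnit_of_mul_isUnit_left hcon)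
    rw [Phi_apply_nonunit p n _ hx, Phi_apply_nonunit p n f hxh]

lemma Phi_range (hn : 1 ≤ n) : LinearMap.range (Phi p n) = Isub p n := by
  apply le_antisymm
  · rintro _ ⟨f, rfl⟩
    constructor
    · intro k hk g
      by_cases hg : IsUnit g.det
      · have hkg : IsUnit (k * g).det := by
          rw [Matrix.det_mul]; exact hk.1.mul hg
        rw [Phi_apply_unit p n f hkg, Phi_apply_unit p n f hg, qcl_left p n hk hg hkg]
      · have hkg : ¬ IsUnit (k * g).det := by
          rw [Matrix.det_mul]
          intro hcon
          exact hg (isUnit_of_mul_isUnit_right hcon)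
        rw [Phi_apply_nonunit p n f hkg, Phi_apply_nonunit p n f hg]
    · intro g hg
      exact Phi_apply_nonunit p n f hg
  · intro φ hφ
    obtain ⟨hφ1, hφ2⟩ := hφ
    refine ⟨WithLp.toLp 2 (fun x => φ (Classical.choose (qcl_surj p n hn x))), ?_⟩
    funext g
    by_cases hg : IsUnit g.det
    · rw [Phi_apply_unit p n _ hg]
      show φ (Classical.choose (qcl_surj p n hn (qcl p n g hg))) = φ g
      obtain ⟨hgc, hqcl⟩ := Classical.choose_spec (qcl_surj p n hn (qcl p n g hg))
      obtain ⟨k, hk, hkg⟩ := qcl_eq_imp p n hgc hg hqcl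
      conv_rhs => rw [hkg]
      exact (hφ1 k hk _).symm
    · rw [Phi_apply_nonunit p n _ hg]
      exact (hφ2 g hg).symm

end Bridge

end St11

open St11 in
theorem stmt11 (p : ℕ) [Fact p.Prime] (n : ℕ) (hn : 1 ≤ n) :
    Module.finrank ℂ ↥(Isub p n) = p ^ (n - 1) * (p + 1) ∧
    ∃ S : Fin (n + 1) → Submodule ℂ (Matrix (Fin 2) (Fin 2) ℤ_[p] → ℂ),
      (∀ i, S i ≤ Isub p n) ∧
      (∀ i, S i ≠ ⊥) ∧
      (∀ i, RightInvariant p (S i)) ∧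
      (∀ i, ∀ W : Submodule ℂ (Matrix (Fin 2) (Fin 2) ℤ_[p] → ℂ),
        W ≤ S i → RightInvariant p W → W = ⊥ ∨ W = S i) ∧
      (∀ i j, i ≠ j →
        ¬ ∃ e : ↥(S i) ≃ₗ[ℂ] ↥(S j),
          ∀ g : Matrix (Fin 2) (Fin 2) ℤ_[p], IsUnit g.det →
            ∀ φ ψ : ↥(S i),
              ((ψ : Matrix (Fin 2) (Fin 2) ℤ_[p] → ℂ) =
                fun x => (φ : Matrix (Fin 2) (Fin 2) ℤ_[p] → ℂ) (x * g)) →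
              ((e ψ : Matrix (Fin 2) (Fin 2) ℤ_[p] → ℂ) =
                fun x => (e φ : Matrix (Fin 2) (Fin 2) ℤ_[p] → ℂ) (x * g))) ∧
      iSupIndep S ∧
      (⨆ i, S i) = Isub p n := by
  have hinj := Phi_inj p n hn
  have hrange := Phi_range p n hn
  constructor
  · rw [← hrange, LinearMap.finrank_range_of_inj hinj, finrank_Wsp p n hn]
  refine ⟨fun i => Submodule.map (Phi p n) (Mp p n i.val), ?_, ?_, ?_, ?_, ?_, ?_, ?_⟩
  · -- S i ≤ Isub
    intro i
    rw [← hrange]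
    rintro _ ⟨u, _, rfl⟩
    exact ⟨u, rfl⟩
  · -- nonzero
    intro i
    obtain ⟨u0, hu0M, hu0ne⟩ := Submodule.ne_bot_iff _ |>.mp
      (Mp_ne_bot p n hn (Nat.lt_succ_iff.mp i.isLt))
    intro hbot
    have : Phi p n u0 ∈ (⊥ : Submodule ℂ (Matrix (Fin 2) (Fin 2) ℤ_[p] → ℂ)) := by
      rw [← hbot]; exact ⟨u0, hu0M, rfl⟩
    rw [Submodule.mem_bot] at this
    exact hu0ne (hinj (by rw [this, map_zero]))
  · -- RightInvariant
    intro i g hg φ hφ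
    obtain ⟨u, huM, rfl⟩ := hφ
    refine ⟨rho p n (gamof p n g hg) u,
      Mp_inv p n (Nat.lt_succ_iff.mp i.isLt) _ u huM, ?_⟩
    exact Phi_rho p n u g hg
  · -- irreducibility
    intro i W hWle hWinv
    set U : Submodule ℂ (Wsp p n) := Submodule.comap (Phi p n) W with hU
    have hUle : U ≤ Mp p n i.val := by
      intro u hu
      have : Phi p n u ∈ W := hu
      obtain ⟨m, hmM, hm⟩ := hWle this
      rwa [← hinj hm]
    have hWmap : Submodule.map (Phi p n) U = W := by
      rw [hU, Submodule.map_comap_eq]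
      refine le_antisymm inf_le_right (le_inf ?_ (le_refl W))
      intro w hw
      obtain ⟨m, _, hm⟩ := hWle hw
      exact ⟨m, hm⟩
    have hUinv : InvS p n U := by
      intro γ u hu
      obtain ⟨h, hh, rfl⟩ := gamof_surj p n hn γ
      show Phi p n (rho p n (gamof p n h hh) u) ∈ W
      rw [Phi_rho p n u h hh]
      exact hWinv h hh (Phi p n u) hu
    rcases model_simple p hn hUle hUinv with h | h
    · left; rw [← hWmap, h, Submodule.map_bot]
    · right; rw [← hWmap, h]
  · -- pairwise non-isomorphic
    intro i j hij hex
    obtain ⟨e, he⟩ := hex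
    set eqi := Submodule.equivMapOfInjective (Phi p n) hinj (Mp p n i.val) with heqi
    set eqj := Submodule.equivMapOfInjective (Phi p n) hinj (Mp p n j.val) with heqj
    have hcoei : ∀ u : Mp p n i.val,
        ((eqi u : Submodule.map (Phi p n) (Mp p n i.val)) :
          Matrix (Fin 2) (Fin 2) ℤ_[p] → ℂ) = Phi p n u :=
      fun u => Submodule.coe_equivMapOfInjective_apply _ hinj _ u
    have hcoej : ∀ u : Mp p n j.val,
        ((eqj u : Submodule.map (Phi p n) (Mp p n j.val)) :
          Matrix (Fin 2) (Fin 2) ℤ_[p] → ℂ) = Phi p n u :=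
      fun u => Submodule.coe_equivMapOfInjective_apply _ hinj _ u
    set ebar : (Mp p n i.val) ≃ₗ[ℂ] (Mp p n j.val) := (eqi.trans e).trans eqj.symm with hebar
    refine model_noniso p hn hij ebar ?_
    intro γ u u' huu
    obtain ⟨h, hh, rfl⟩ := gamof_surj p n hn γ
    have hψ : ((e (eqi u') : Submodule.map (Phi p n) (Mp p n j.val)) :
        Matrix (Fin 2) (Fin 2) ℤ_[p] → ℂ) =
        fun x => ((e (eqi u) : Submodule.map (Phi p n) (Mp p n j.val)) :
          Matrix (Fin 2) (Fin 2) ℤ_[p] → ℂ) (x * h) := by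
      refine he h hh (eqi u) (eqi u') ?_
      rw [hcoei, hcoei, huu, Phi_rho p n _ h hh]
    have hbar : ∀ w : Mp p n i.val,
        ((e (eqi w) : Submodule.map (Phi p n) (Mp p n j.val)) :
          Matrix (Fin 2) (Fin 2) ℤ_[p] → ℂ) = Phi p n (ebar w) := by
      intro w
      rw [hebar]
      have : eqj ((eqi.trans e).trans eqj.symm w) = e (eqi w) := by
        simp
      rw [← this, hcoej]
    rw [hbar, hbar] at hψ
    rw [← Phi_rho p n _ h hh] at hψ
    exact hinj hψ
  · -- independence
    have hindep := Mp_indep p n hn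
    intro i
    have h1 := hindep i
    rw [disjoint_iff] at h1 ⊢
    have h2 : (⨆ j, ⨆ (_ : j ≠ i), Submodule.map (Phi p n) (Mp p n (j : Fin (n + 1)).val)) =
        Submodule.map (Phi p n) (⨆ j, ⨆ (_ : j ≠ i), Mp p n (j : Fin (n + 1)).val) := by
      rw [Submodule.map_iSup]
      exact iSup_congr fun j => by rw [Submodule.map_iSup]
    rw [h2, ← Submodule.map_inf _ hinj, h1, Submodule.map_bot]
  · -- supremum
    have h3 : (⨆ i : Fin (n + 1), Submodule.map (Phi p n) (Mp p n i.val)) =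
        Submodule.map (Phi p n) (⨆ i : Fin (n + 1), Mp p n i.val) :=
      (Submodule.map_iSup _ _).symm
    rw [h3, Mp_sup p n hn, Submodule.map_top, hrange]
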